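/- If G' is obtained from a graph G by adding a vertex v adjacent to all n vertices of G, then USN(G') = USN(G) + 1. -/

import Mathlib

/-- A disjointness labelling of `G`: an injective assignment of nonempty
finite subsets of the universe `U` to vertices, such that two distinct
vertices are adjacent iff their labels are disjoint. -/
def IsDisjLabelling {V U : Type*} (G : SimpleGraph V) (ℓ : V → Finset U) : Prop :=
  Function.Injective ℓ ∧ (∀ v, (ℓ v).Nonempty) ∧
    ∀ u v : V, u ≠ v → (G.Adj u v ↔ Disjoint (ℓ u) (ℓ v))

/-- The universe size number: the minimum size of a universe admitting a
disjointness labelling of `G`. -/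
noncomputable def USN {V : Type*} (G : SimpleGraph V) : ℕ :=
  sInf {m : ℕ | ∃ ℓ : V → Finset (Fin m), IsDisjLabelling G ℓ}

/-- `cone G` is `G` together with one new universal vertex (`none`). -/
def cone {V : Type*} (G : SimpleGraph V) : SimpleGraph (Option V) :=
  SimpleGraph.fromRel (fun x y => x = none ∨ ∃ u v, x = some u ∧ y = some v ∧ G.Adj u v)

open Finset

lemma cone_adj_none_some {V : Type*} (G : SimpleGraph V) (u : V) :
    (cone G).Adj none (some u) := by
  simp [cone, SimpleGraph.fromRel_adj]

lemma cone_adj_some_some {V : Type*} (G : SimpleGraph V) (u v : V) :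
    (cone G).Adj (some u) (some v) ↔ G.Adj u v := by
  simp only [cone, SimpleGraph.fromRel_adj]
  constructor
  · rintro ⟨hne, (h | ⟨a, b, ha, hb, hab⟩) | (h | ⟨a, b, ha, hb, hab⟩)⟩
    · simp at h
    · simp_all
    · simp at h
    · simp_all
      exact hab.symm
  · intro h
    exact ⟨by simpa using h.ne, Or.inl (Or.inr ⟨u, v, rfl, rfl, h⟩)⟩

lemma IsDisjLabelling.map {V U W : Type*} {G : SimpleGraph V} {ℓ : V → Finset U}
    (h : IsDisjLabelling G ℓ) (f : U ↪ W) :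
    IsDisjLabelling G (fun v => (ℓ v).map f) := by
  obtain ⟨hinj, hne, hadj⟩ := h
  refine ⟨fun a b hab => hinj (Finset.map_injective f hab), fun v => (hne v).map,
    fun u v huv => ?_⟩
  rw [hadj u v huv, Finset.disjoint_map]

/-- Every finite graph has a disjointness labelling on some `Fin m`. -/
lemma exists_labelling {V : Type*} [Fintype V] [DecidableEq V] (G : SimpleGraph V) :
    ∃ m, ∃ ℓ : V → Finset (Fin m), IsDisjLabelling G ℓ := by
  classical
  set U := V ⊕ V × V
  set ℓ₀ : V → Finset U := fun v =>
    insert (Sum.inl v)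
      ((Finset.univ.filter
        (fun p : V × V => (p.1 = v ∨ p.2 = v) ∧ p.1 ≠ p.2 ∧ ¬ G.Adj p.1 p.2)).image Sum.inr)
    with hℓ₀
  have key : IsDisjLabelling G ℓ₀ := by
    refine ⟨?_, fun v => ⟨Sum.inl v, mem_insert_self _ _⟩, fun u v huv => ?_⟩
    · intro a b hab
      have : (Sum.inl a : U) ∈ ℓ₀ b := hab ▸ mem_insert_self _ _
      simp only [hℓ₀, mem_insert, mem_image, mem_filter] at this
      rcases this with h | ⟨p, _, hp⟩
      · exact Sum.inl.inj h
      · exact absurd hp (by simp)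
    · constructor
      · intro hadj
        rw [Finset.disjoint_left]
        intro x hxu hxv
        simp only [hℓ₀, mem_insert, mem_image, mem_filter, mem_univ, true_and] at hxu hxv
        rcases hxu with rfl | ⟨p, ⟨hp1, hpne, hpnadj⟩, rfl⟩
        · rcases hxv with h | ⟨q, _, hq⟩
          · exact huv (Sum.inl.inj h)
          · exact absurd hq (by simp)
        · rcases hxv with h | ⟨q, ⟨hq1, _, _⟩, hq⟩
          · exact absurd h (by simp)
          · have hpq : q = p := Sum.inr.inj hq
            subst hpq
            rcases hp1 with rfl | rfl <;> rcases hq1 with h | h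
            · exact huv h
            · subst h; exact hpnadj hadj
            · subst h; exact hpnadj hadj.symm
            · exact huv h
      · intro hdisj
        by_contra hadj
        have h1 : (Sum.inr (u, v) : U) ∈ ℓ₀ u := by
          simp [hℓ₀, huv, hadj]
        have h2 : (Sum.inr (u, v) : U) ∈ ℓ₀ v := by
          simp [hℓ₀, huv, hadj]
        exact Finset.disjoint_left.1 hdisj h1 h2
  exact ⟨Fintype.card U, _, key.map (Fintype.equivFin U).toEmbedding⟩

/-- Extension: labelling of `G` on `Fin m` gives labelling of `cone G` on `Fin (m+1)`. -/
lemma extend_labelling {V : Type*} {G : SimpleGraph V} {m : ℕ} {ℓ : V → Finset (Fin m)}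
    (h : IsDisjLabelling G ℓ) :
    IsDisjLabelling (cone G)
      (fun x => x.elim {Fin.last m} (fun u => (ℓ u).map ⟨Fin.castSucc, Fin.castSucc_injective m⟩)) := by
  obtain ⟨hinj, hne, hadj⟩ := h
  have hlast : ∀ u : V, (Fin.last m) ∉ (ℓ u).map ⟨Fin.castSucc, Fin.castSucc_injective m⟩ := by
    intro u hmem
    rw [Finset.mem_map] at hmem
    obtain ⟨x, _, hx⟩ := hmem
    exact absurd hx (Fin.castSucc_lt_last x).ne
  refine ⟨?_, ?_, ?_⟩
  · rintro (_ | a) (_ | b) hab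
    · rfl
    · simp only [Option.elim_none, Option.elim_some] at hab
      exact absurd (hab ▸ mem_singleton_self (Fin.last m)) (hlast b)
    · simp only [Option.elim_none, Option.elim_some] at hab
      exact absurd (hab.symm ▸ mem_singleton_self (Fin.last m)) (hlast a)
    · simp only [Option.elim_none, Option.elim_some] at hab
      exact congrArg some (hinj (Finset.map_injective _ hab))
  · rintro (_ | u)
    · exact ⟨_, mem_singleton_self _⟩
    · exact (hne u).map
  · rintro (_ | u) (_ | v) huv
    · exact absurd rfl huv
    · simp only [Option.elim]
      constructor
      · intro _
        rw [Finset.disjoint_left]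
        rintro x hx
        rw [mem_singleton] at hx
        subst hx
        intro hmem
        exact hlast v hmem
      · intro _; exact cone_adj_none_some G v
    · simp only [Option.elim]
      constructor
      · intro _
        rw [Finset.disjoint_right]
        rintro x hx
        rw [mem_singleton] at hx
        subst hx
        intro hmem
        exact hlast u hmem
      · intro _; exact (cone_adj_none_some G u).symm
    · simp only [Option.elim]
      rw [cone_adj_some_some, Finset.disjoint_map]
      exact hadj u v (by simpa using huv)


/-- Adding a universal vertex increases the universe size number by exactly one. -/
theorem stmt3 {V : Type*} [Fintype V] [DecidableEq V] (G : SimpleGraph V) :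
    USN (cone G) = USN G + 1 := by
  classical
  obtain ⟨m₀, ℓ₀, hℓ₀⟩ := exists_labelling G
  have hGne : {m : ℕ | ∃ ℓ : V → Finset (Fin m), IsDisjLabelling G ℓ}.Nonempty :=
    ⟨m₀, ℓ₀, hℓ₀⟩
  have hConene : {m : ℕ | ∃ ℓ : Option V → Finset (Fin m), IsDisjLabelling (cone G) ℓ}.Nonempty :=
    ⟨m₀ + 1, _, extend_labelling hℓ₀⟩
  apply le_antisymm
  · -- USN (cone G) ≤ USN G + 1
    obtain ⟨ℓ, hℓ⟩ := Nat.sInf_mem hGne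
    exact Nat.sInf_le ⟨_, extend_labelling hℓ⟩
  · -- USN G + 1 ≤ USN (cone G)
    set k := USN (cone G) with hk
    obtain ⟨ℓ', hℓ'⟩ : ∃ ℓ : Option V → Finset (Fin k), IsDisjLabelling (cone G) ℓ :=
      Nat.sInf_mem hConene
    obtain ⟨hinj, hne, hadj⟩ := hℓ'
    set L : Finset (Fin k) := ℓ' none with hL
    have hdisjL : ∀ u : V, Disjoint L (ℓ' (some u)) :=
      fun u => (hadj none (some u) (by simp)).1 (cone_adj_none_some G u)
    -- labelling into the subtype
    set p : Fin k → Prop := fun x => x ∈ Lᶜ with hp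
    set ℓ₂ : V → Finset {x : Fin k // p x} := fun u => (ℓ' (some u)).subtype p with hℓ₂
    have hsub : ∀ u : V, (ℓ₂ u).map (Function.Embedding.subtype p) = ℓ' (some u) := by
      intro u
      rw [hℓ₂, Finset.subtype_map, Finset.filter_true_of_mem]
      intro x hx
      simp only [hp, Finset.mem_compl]
      exact fun hxL => Finset.disjoint_left.1 (hdisjL u) hxL hx
    have hℓ₂lab : IsDisjLabelling G ℓ₂ := by
      refine ⟨?_, ?_, ?_⟩
      · intro a b hab
        have := congrArg (Finset.map (Function.Embedding.subtype p)) hab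
        rw [hsub a, hsub b] at this
        simpa using hinj this
      · intro u
        obtain ⟨x, hx⟩ := hne (some u)
        have : x ∈ (ℓ₂ u).map (Function.Embedding.subtype p) := (hsub u).symm ▸ hx
        obtain ⟨y, hy, _⟩ := Finset.mem_map.1 this
        exact ⟨y, hy⟩
      · intro u v huv
        rw [← cone_adj_some_some G, hadj (some u) (some v) (by simpa using huv),
          ← hsub u, ← hsub v, Finset.disjoint_map]
    have hLne : L.Nonempty := hne none
    have hk1 : 1 ≤ k := by
      obtain ⟨x, _⟩ := hLne
      have : k ≠ 0 := fun h => Fin.elim0 (h ▸ x)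
      omega
    have hLpos : 0 < L.card := Finset.card_pos.2 hLne
    have hcard : Fintype.card {x : Fin k // p x} ≤ k - 1 := by
      have heq : Fintype.card {x : Fin k // p x} = (Lᶜ : Finset (Fin k)).card := by
        simp only [hp]
        convert Fintype.card_coe (Lᶜ) using 2
      rw [heq, Finset.card_compl, Fintype.card_fin]
      omega
    set e : {x : Fin k // p x} ↪ Fin (k - 1) :=
      (Fintype.equivFin {x : Fin k // p x}).toEmbedding.trans
        (Fin.castLEEmb hcard) with he
    have : USN G ≤ k - 1 := Nat.sInf_le ⟨_, hℓ₂lab.map e⟩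
    omega
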